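/- Let R, F be real n×n matrices with R = Rᵀ ≻ 0 and F + Fᵀ ⪰ 0, and let B be n×m and L be n×m matrices with B = L Lᵀ B. Consider the discrete-time descriptor system (R+F)x^{n+1} = (R−F)x^n + B u^n with output y^n = Lᵀ x^n. Then the storage function E(x) = (Δt/2) xᵀ R x satisfies the dissipation inequality E(x^{n+1}) − E(x^n) ≤ Δt · ((y^n + y^{n+1})ᵀ/2) Lᵀ B u^n for all inputs u^n and all n. -/

import Mathlib

open Matrix

/-- The FDTD descriptor system `(R+F) x^{n+1} = (R−F) x^n + B u^n`, `y^n = Lᵀ x^n`,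
with `R = Rᵀ ≻ 0`, `F + Fᵀ ⪰ 0`, `B = L Lᵀ B`, is dissipative with storage function
`E(x) = (Δt/2) xᵀ R x` and supply rate `Δt ((y^n + y^{n+1})ᵀ/2) Lᵀ B u^n`. -/
theorem stmt0 {n m : ℕ} (Δt : ℝ) (hΔt : 0 < Δt)
    (R F : Matrix (Fin n) (Fin n) ℝ) (B L : Matrix (Fin n) (Fin m) ℝ)
    (hR : R.PosDef) (hRsym : R = Rᵀ)
    (hF : (F + Fᵀ).PosSemidef)
    (hBL : B = L * Lᵀ * B)
    (x : ℕ → Fin n → ℝ) (u : ℕ → Fin m → ℝ)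
    (hsys : ∀ k : ℕ, (R + F).mulVec (x (k + 1)) = (R - F).mulVec (x k) + B.mulVec (u k))
    (y : ℕ → Fin m → ℝ) (hy : ∀ k : ℕ, y k = Lᵀ.mulVec (x k))
    (E : (Fin n → ℝ) → ℝ) (hE : ∀ v, E v = (Δt / 2) * (v ⬝ᵥ R.mulVec v)) :
    ∀ k : ℕ, E (x (k + 1)) - E (x k) ≤
      Δt * (((1 : ℝ) / 2) • (y k + y (k + 1)) ⬝ᵥ (Lᵀ * B).mulVec (u k)) := by
  intro k
  have hsym : ∀ v w : Fin n → ℝ, v ⬝ᵥ R.mulVec w = w ⬝ᵥ R.mulVec v := by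
    intro v w
    rw [dotProduct_mulVec, ← mulVec_transpose, ← hRsym, dotProduct_comm]
  set xp := x (k + 1)
  set xk := x k
  set s : Fin n → ℝ := xp + xk with hs
  have hd : R.mulVec (xp - xk) = B.mulVec (u k) - F.mulVec s := by
    have hk := hsys k
    rw [add_mulVec, sub_mulVec] at hk
    rw [mulVec_sub, hs, mulVec_add]
    linear_combination hk
  -- energy difference
  have key : xp ⬝ᵥ R.mulVec xp - xk ⬝ᵥ R.mulVec xk
      = s ⬝ᵥ B.mulVec (u k) - s ⬝ᵥ F.mulVec s := by
    have h1 : s ⬝ᵥ R.mulVec (xp - xk) = xp ⬝ᵥ R.mulVec xp - xk ⬝ᵥ R.mulVec xk := by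
      rw [hs, mulVec_sub, add_dotProduct, dotProduct_sub, dotProduct_sub,
        hsym xk xp]
      ring
    rw [← h1, hd, dotProduct_sub]
  have hFs : 0 ≤ s ⬝ᵥ F.mulVec s := by
    have h2 : s ⬝ᵥ (F + Fᵀ).mulVec s = 2 * (s ⬝ᵥ F.mulVec s) := by
      rw [add_mulVec, dotProduct_add]
      have : s ⬝ᵥ Fᵀ.mulVec s = s ⬝ᵥ F.mulVec s := by
        rw [dotProduct_mulVec, ← mulVec_transpose, transpose_transpose, dotProduct_comm]
      rw [this]; ring
    have h3 : (0:ℝ) ≤ s ⬝ᵥ (F + Fᵀ).mulVec s := by simpa using hF.dotProduct_mulVec_nonneg s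
    linarith [h2 ▸ h3]
  -- rewrite RHS
  have hrhs : ((1 : ℝ) / 2) • (y k + y (k + 1)) ⬝ᵥ (Lᵀ * B).mulVec (u k)
      = (1 / 2) * (s ⬝ᵥ B.mulVec (u k)) := by
    rw [hy k, hy (k + 1), smul_dotProduct, ← mulVec_add]
    have : Lᵀ.mulVec (xk + xp) = Lᵀ.mulVec s := by rw [hs]; ring_nf
    rw [this, smul_eq_mul, mulVec_transpose, dotProduct_mulVec, ← dotProduct_mulVec,
      ← dotProduct_mulVec, mulVec_mulVec, ← Matrix.mul_assoc, ← hBL]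
  rw [hE, hE, hrhs]
  have : (Δt / 2) * (xp ⬝ᵥ R.mulVec xp) - (Δt / 2) * (xk ⬝ᵥ R.mulVec xk)
      = (Δt / 2) * (s ⬝ᵥ B.mulVec (u k)) - (Δt / 2) * (s ⬝ᵥ F.mulVec s) := by
    rw [← mul_sub, key, mul_sub]
  rw [this]
  nlinarith [hFs, hΔt]
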